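/- Let ε>0 and π₀,π₁>0, and set q₂ = e^ε·π₀/(e^ε·π₀+π₁) and q₃ = π₀/(π₀+e^ε·π₁). Then for every convex function u:[0,1]→ℝ: π₁·u(0) + ((π₁+e^ε·π₀)/(e^{2ε}−1))·u(q₂) ≥ ((e^{2ε}·π₁+e^ε·π₀)/(e^{2ε}−1))·u(q₃). -/

import Mathlib

open Real

/-- a convexity inequality used in the analysis of the dominant
point (Eq. (12) in the paper's appendix). -/
theorem statement12 (ε π0 π1 : ℝ) (hε : 0 < ε) (h0 : 0 < π0) (h1 : 0 < π1)
    (u : ℝ → ℝ) (hu : ConvexOn ℝ (Set.Icc 0 1) u) :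
    (Real.exp (2 * ε) * π1 + Real.exp ε * π0) / (Real.exp (2 * ε) - 1) *
        u (π0 / (π0 + Real.exp ε * π1)) ≤
      π1 * u 0 +
        (π1 + Real.exp ε * π0) / (Real.exp (2 * ε) - 1) *
          u (Real.exp ε * π0 / (Real.exp ε * π0 + π1)) := by
  have hE : 1 < Real.exp ε := by
    have := Real.exp_lt_exp.mpr hε
    simpa using this
  set E := Real.exp ε with hEdef
  have h2 : Real.exp (2 * ε) = E ^ 2 := by
    rw [two_mul, Real.exp_add]; ring
  have hEpos : 0 < E := lt_trans one_pos hE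
  have hD : 0 < E ^ 2 - 1 := by nlinarith
  have hA : 0 < E ^ 2 * π1 + E * π0 := by positivity
  set a := π1 * (E ^ 2 - 1) / (E ^ 2 * π1 + E * π0) with hadef
  set b := (π1 + E * π0) / (E ^ 2 * π1 + E * π0) with hbdef
  have hab : a + b = 1 := by
    rw [hadef, hbdef, ← add_div, div_eq_one_iff_eq (ne_of_gt hA)]; ring
  have ha : 0 ≤ a := by positivity
  have hb : 0 ≤ b := by positivity
  have hmem0 : (0 : ℝ) ∈ Set.Icc (0 : ℝ) 1 := by constructor <;> norm_num
  have hmem2 : E * π0 / (E * π0 + π1) ∈ Set.Icc (0 : ℝ) 1 := by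
    constructor
    · positivity
    · rw [div_le_one (by positivity)]; linarith
  have key := hu.2 hmem0 hmem2 ha hb hab
  have hq : a • (0 : ℝ) + b • (E * π0 / (E * π0 + π1)) = π0 / (π0 + E * π1) := by
    simp only [smul_eq_mul, mul_zero, zero_add, hbdef]
    rw [div_mul_div_comm, div_eq_div_iff (by positivity) (by positivity)]
    ring
  rw [hq] at key
  simp only [smul_eq_mul] at key
  rw [h2]
  have hmul := mul_le_mul_of_nonneg_left key
    (le_of_lt (div_pos hA hD))
  have e1 : (E ^ 2 * π1 + E * π0) / (E ^ 2 - 1) * (a * u 0 + b * u (E * π0 / (E * π0 + π1)))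
      = π1 * u 0 + (π1 + E * π0) / (E ^ 2 - 1) * u (E * π0 / (E * π0 + π1)) := by
    rw [hadef, hbdef]
    field_simp
  linarith [hmul, e1.le, e1.ge]
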